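/- Let A be a finite alphabet, G a finite group, η : A* → G a morphism, and L' = η^{-1}(1_G). Define u ⪯ v iff v ∈ ↑_{L'} u. Then ⪯ is a well-quasi-order: for every infinite sequence (u_i)_{i∈ℕ} of words in A*, there exist indices i < j with u_i ⪯ u_j. -/

import Mathlib

/-- The marked product `↑_L w = L a₁ L a₂ ⋯ aₙ L` for `w = a₁ ⋯ aₙ`. -/
def markedProd {A : Type*} (L : Set (List A)) : List A → Set (List A)
  | [] => L
  | a :: w => {v | ∃ x y, x ∈ L ∧ y ∈ markedProd L w ∧ v = x ++ a :: y}

/-- Encoding of a word: each letter is tagged with the η-value of the prefix before it. -/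
def eaux {A : Type*} {G : Type*} [Group G] (η : List A → G) : G → List A → List (G × Option A)
  | _, [] => []
  | g, a :: w => (g, some a) :: eaux η (g * η [a]) w

/-- Shifted marked product: the first gap must have η-value `c`, the rest `1`. -/
def mps {A : Type*} {G : Type*} [Group G] (η : List A → G) (c : G) : List A → Set (List A)
  | [] => {v | η v = c}
  | a :: w => {v | ∃ x y, η x = c ∧ y ∈ mps η 1 w ∧ v = x ++ a :: y}

lemma mps_one {A : Type*} {G : Type*} [Group G] (η : List A → G) (u : List A) :
    mps η 1 u = markedProd {x : List A | η x = 1} u := by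
  induction u with
  | nil => rfl
  | cons a w ih => simp [mps, markedProd, ih, Set.mem_setOf_eq]

lemma eaux_snd {A : Type*} {G : Type*} [Group G] (η : List A → G) :
    ∀ (w : List A) (g : G), ∀ p ∈ eaux η g w, ∃ a, p.2 = some a := by
  intro w
  induction w with
  | nil => intro g p hp; simp [eaux] at hp
  | cons a w ih =>
    intro g p hp
    rcases List.mem_cons.mp hp with h | h
    · exact ⟨a, h ▸ rfl⟩
    · exact ih _ p h

lemma key {A : Type*} {G : Type*} [Group G] (η : List A → G) (hη1 : η [] = 1)
    (hηm : ∀ u v : List A, η (u ++ v) = η u * η v) :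
    ∀ (v u : List A) (g h : G), (eaux η g u).Sublist (eaux η h v) →
      h * η v = g * η u → v ∈ mps η (h⁻¹ * g) u := by
  intro v
  induction v with
  | nil =>
    intro u g h hsub heq
    cases u with
    | nil =>
      simp only [mps, Set.mem_setOf_eq, hη1]
      rw [hη1] at heq
      simp at heq
      rw [heq]
      group
    | cons a w => simp [eaux] at hsub
  | cons b v' ih =>
    intro u g h hsub heq
    cases u with
    | nil =>
      simp only [mps, Set.mem_setOf_eq]
      rw [hη1, mul_one] at heq
      rw [← heq]; group
    | cons a w =>
      simp only [eaux] at hsub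
      cases hsub with
      | cons _ hsub =>
        -- head of v skipped
        have hcond : (h * η [b]) * η v' = g * η (a :: w) := by
          have : η (b :: v') = η [b] * η v' := by
            have := hηm [b] v'; simpa using this
          rw [this, ← mul_assoc] at heq
          exact heq
        have := ih (a :: w) g (h * η [b]) hsub hcond
        rcases this with ⟨x, y, hx, hy, hv⟩
        refine ⟨b :: x, y, ?_, hy, by rw [hv]; rfl⟩
        have : η (b :: x) = η [b] * η x := by
          have := hηm [b] x; simpa using this
        rw [this, hx]
        group
      | cons_cons _ hsub =>
        -- heads matched: the head pairs were unified, so now u = b :: w, h = g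
        have hcond : (g * η [b]) * η v' = (g * η [b]) * η w := by
          have h1 : η (b :: v') = η [b] * η v' := by
            have := hηm [b] v'; simpa using this
          have h2 : η (b :: w) = η [b] * η w := by
            have := hηm [b] w; simpa using this
          rw [h1, h2, ← mul_assoc, ← mul_assoc] at heq
          exact heq
        have := ih w (g * η [b]) (g * η [b]) hsub hcond
        rw [inv_mul_cancel] at this
        exact ⟨[], v', by simpa using hη1, this, rfl⟩

theorem markedProd_rel_wqo (A : Type*) [Fintype A] (G : Type*) [Group G] [Fintype G]
    (η : List A → G) (hη1 : η [] = 1) (hηm : ∀ u v : List A, η (u ++ v) = η u * η v)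
    (f : ℕ → List A) :
    ∃ i j : ℕ, i < j ∧ f j ∈ markedProd {x : List A | η x = 1} (f i) := by
  classical
  -- encode each word with its total η-value prepended
  set F : ℕ → List (G × Option A) := fun i => (η (f i), none) :: eaux η 1 (f i) with hF
  -- equality is PWO on the finite type G × Option A
  have hpwo : (Set.univ : Set (G × Option A)).PartiallyWellOrderedOn (· = ·) :=
    Set.Finite.partiallyWellOrderedOn Set.finite_univ
  have hhig := Set.PartiallyWellOrderedOn.partiallyWellOrderedOn_sublistForall₂
    (· = ·) hpwo
  obtain ⟨i, j, hij, hrel⟩ := hhig.exists_lt (f := F) (fun n x _ => Set.mem_univ x)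
  -- SublistForall₂ Eq implies Sublist
  have hsub : (F i).Sublist (F j) := by
    rcases List.sublistForall₂_iff.1 hrel with ⟨l, hfor, hsl⟩
    have heq : F i = l :=
      (congrFun (congrFun List.forall₂_eq_eq_eq (F i)) l).mp hfor
    rwa [heq]
  refine ⟨i, j, hij, ?_⟩
  -- extract η (f i) = η (f j) and sublist of encodings
  have hηeq : η (f i) = η (f j) := by
    have hmem : ((η (f i), none) : G × Option A) ∈ F j :=
      hsub.subset List.mem_cons_self
    rcases List.mem_cons.mp hmem with h | h
    · exact congrArg Prod.fst h
    · obtain ⟨a, ha⟩ := eaux_snd η (f j) 1 _ h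
      simp at ha
  have hsub' : (eaux η 1 (f i)).Sublist (eaux η 1 (f j)) := by
    rw [hF] at hsub
    simp only at hsub
    rw [hηeq] at hsub
    exact List.cons_sublist_cons.mp hsub
  have := key η hη1 hηm (f j) (f i) 1 1 hsub' (by rw [hηeq])
  rw [inv_mul_cancel] at this
  rwa [mps_one] at this
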